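/- arXiv:1607.01362 — 3 statements merged into one kernel-verified Lean document; each statement's English description precedes it below -/
import Mathlib

section
/- Let X and Y be real Banach spaces, A : X → Y a bounded linear operator, and ε > 0. Let (z*_λ)_{λ∈Q} be a net in Y* (indexed by a directed preordered set Q) that converges to 0 in the w*-topology and satisfies ‖A* z*_λ‖ ≥ ε for every λ ∈ Q. Then for every η > 0, every weakly open set U ⊆ X containing 0, every w*-open set V ⊆ Y* containing 0, and every λ₀ ∈ Q, there exist x ∈ B_X ∩ U and λ ∈ Q such that λ₀ ≤ λ, z*_λ ∈ V, and z*_λ(A x) > ε/2 − η. -/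
open Filter Topology Pointwise NormedSpace

noncomputable section

lemma weakBilin_mem_nhds {E F : Type*} [AddCommGroup E] [Module ℝ E] [AddCommGroup F] [Module ℝ F]
    (B : E →ₗ[ℝ] F →ₗ[ℝ] ℝ) {W : Set (WeakBilin B)} (hW : W ∈ 𝓝 (0 : WeakBilin B)) :
    ∃ (s : Finset F) (δ : ℝ), 0 < δ ∧ ∀ x : WeakBilin B, (∀ f ∈ s, |B x f| < δ) → x ∈ W := by
  have h1 : W ∈ Filter.comap (fun x (y : F) => B x y) (𝓝 fun y => B (0 : E) y) := by
    rw [← nhds_induced]; exact hW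
  obtain ⟨T, hT, hTsub⟩ := Filter.mem_comap.mp h1
  have hg0 : (fun y => B (0 : E) y) = fun _ : F => (0 : ℝ) := by ext y; simp
  rw [hg0, nhds_pi] at hT
  obtain ⟨I, tt, htt, hIsub⟩ := Filter.mem_pi'.mp hT
  choose! d hd hball using fun y => Metric.mem_nhds_iff.mp (htt y)
  by_cases hI : I.Nonempty
  · refine ⟨I, I.inf' hI d, (Finset.lt_inf'_iff hI).mpr fun y _ => hd y, fun x hx => ?_⟩
    apply hTsub
    apply hIsub
    intro y hy
    apply hball y
    simp only [Metric.mem_ball, Real.dist_eq, sub_zero]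
    exact lt_of_lt_of_le (hx y hy) (Finset.inf'_le d hy)
  · refine ⟨∅, 1, one_pos, fun x _ => ?_⟩
    apply hTsub
    apply hIsub
    intro y hy
    simp [Finset.not_nonempty_iff_eq_empty.mp hI] at hy

variable {X Y : Type*} [NormedAddCommGroup X] [NormedSpace ℝ X] [CompleteSpace X]
  [NormedAddCommGroup Y] [NormedSpace ℝ Y] [CompleteSpace Y]

/-- The adjoint `A* : Y* → X*` of a bounded linear operator, `(A* g)(x) = g (A x)`. -/
def opAdjoint (A : X →L[ℝ] Y) : StrongDual ℝ Y →L[ℝ] StrongDual ℝ X :=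
  (ContinuousLinearMap.compSL X Y ℝ (RingHom.id ℝ) (RingHom.id ℝ)).flip A

/-- A set of functionals is weak-star open (open in `σ(E*, E)`). -/
def IsWeakStarOpen {E : Type*} [NormedAddCommGroup E] [NormedSpace ℝ E]
    (V : Set (StrongDual ℝ E)) : Prop :=
  IsOpen (StrongDual.toWeakDual '' V)

/-- A set is weakly open (open in the weak topology `σ(E, E*)`). -/
def IsWeaklyOpen {E : Type*} [NormedAddCommGroup E] [NormedSpace ℝ E] (U : Set E) : Prop :=
  IsOpen (toWeakSpace ℝ E '' U)

lemma isWeaklyOpen_basic {E : Type*} [NormedAddCommGroup E] [NormedSpace ℝ E] {U : Set E}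
    (hU : IsWeaklyOpen U) (hU0 : (0 : E) ∈ U) :
    ∃ (s : Finset (StrongDual ℝ E)) (δ : ℝ), 0 < δ ∧ ∀ x : E, (∀ f ∈ s, |f x| < δ) → x ∈ U := by
  have hmem : toWeakSpace ℝ E '' U ∈ 𝓝 (0 : WeakSpace ℝ E) :=
    hU.mem_nhds ⟨0, hU0, map_zero _⟩
  obtain ⟨s, δ, hδ, hs⟩ := weakBilin_mem_nhds ((topDualPairing ℝ E).flip) hmem
  refine ⟨s, δ, hδ, fun x hx => ?_⟩
  obtain ⟨u, hu, heq⟩ := hs (toWeakSpace ℝ E x) (fun f hf => hx f hf)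
  rwa [(toWeakSpace ℝ E).injective heq] at hu

lemma isWeakStarOpen_basic {E : Type*} [NormedAddCommGroup E] [NormedSpace ℝ E]
    {V : Set (StrongDual ℝ E)} (hV : IsWeakStarOpen V) (hV0 : (0 : StrongDual ℝ E) ∈ V) :
    ∃ (t : Finset E) (δ : ℝ), 0 < δ ∧ ∀ g : StrongDual ℝ E, (∀ y ∈ t, |g y| < δ) → g ∈ V := by
  have hmem : StrongDual.toWeakDual '' V ∈ 𝓝 (0 : WeakDual ℝ E) :=
    hV.mem_nhds ⟨0, hV0, map_zero _⟩
  obtain ⟨t, δ, hδ, ht⟩ := weakBilin_mem_nhds (topDualPairing ℝ E) hmem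
  refine ⟨t, δ, hδ, fun g hg => ?_⟩
  obtain ⟨u, hu, heq⟩ := ht (StrongDual.toWeakDual g) (fun y hy => hg y hy)
  rwa [(StrongDual.toWeakDual (𝕜 := ℝ) (E := E)).injective heq] at hu

/-- Lemma 3.3 of the paper: if `(z_λ)` is a w*-null net in `Y*` with
`‖A* z_λ‖ ≥ ε`, then for every `η > 0`, every weakly open `U ∋ 0`, every w*-open `V ∋ 0`
and every `λ₀` there are `x ∈ B_X ∩ U` and `λ ≥ λ₀` with `z_λ ∈ V` and
`z_λ(Ax) > ε/2 − η`. -/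
theorem statement0 (A : X →L[ℝ] Y) (ε : ℝ) (hε : 0 < ε)
    {ι : Type*} [Preorder ι] [IsDirected ι (· ≤ ·)] [Nonempty ι]
    (z : ι → StrongDual ℝ Y)
    (hz_null : ∀ y : Y, Tendsto (fun i => z i y) atTop (𝓝 0))
    (hz_big : ∀ i, ε ≤ ‖opAdjoint A (z i)‖) :
    ∀ η : ℝ, 0 < η → ∀ U : Set X, IsWeaklyOpen U → (0 : X) ∈ U →
      ∀ V : Set (StrongDual ℝ Y), IsWeakStarOpen V → (0 : StrongDual ℝ Y) ∈ V →
        ∀ i₀ : ι, ∃ x ∈ Metric.closedBall (0 : X) 1 ∩ U, ∃ i : ι,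
          i₀ ≤ i ∧ z i ∈ V ∧ ε / 2 - η < z i (A x) := by
  intro η hη U hUopen hU0 V hVopen hV0 i₀
  haveI : (atTop : Filter ι).NeBot := atTop_neBot_iff.mpr ⟨‹_›, ‹_›⟩
  obtain ⟨s, δ, hδ, hsU⟩ := isWeaklyOpen_basic hUopen hU0
  obtain ⟨t, δ', hδ', htV⟩ := isWeakStarOpen_basic hVopen hV0
  have hVev : ∀ᶠ i in (atTop : Filter ι), z i ∈ V := by
    have h : ∀ᶠ i in (atTop : Filter ι), ∀ y ∈ t, |z i y| < δ' := by
      rw [eventually_all_finset]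
      intro y hy
      exact (Metric.tendsto_nhds.mp (hz_null y) δ' hδ').mono
        (fun i hi => by simpa [Real.dist_eq] using hi)
    exact h.mono fun i hi => htV _ hi
  -- build the sequence
  obtain ⟨f, hP, hr⟩ := exists_seq_of_forall_finset_exists
    (fun p : ι × X => i₀ ≤ p.1 ∧ ‖p.2‖ ≤ 1 ∧ z p.1 ∈ V ∧ ε - η < z p.1 (A p.2))
    (fun p q => p.1 ≤ q.1 ∧ |z q.1 (A p.2)| < η)
    (by
      intro S _
      classical
      obtain ⟨j, hj⟩ := Finset.exists_le (insert i₀ (S.image Prod.fst))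
      have hev : ∀ᶠ i in (atTop : Filter ι),
          j ≤ i ∧ z i ∈ V ∧ ∀ p ∈ S, |z i (A p.2)| < η := by
        refine (eventually_ge_atTop j).and (hVev.and ?_)
        rw [eventually_all_finset]
        intro p _
        exact (Metric.tendsto_nhds.mp (hz_null (A p.2)) η hη).mono
          (fun i hi => by simpa [Real.dist_eq] using hi)
      obtain ⟨i, hij, hiV, hiS⟩ := hev.exists
      have hlt : ε - η < ‖opAdjoint A (z i)‖ := lt_of_lt_of_le (by linarith) (hz_big i)
      obtain ⟨x, hx1, hx2⟩ := (opAdjoint A (z i)).exists_lt_apply_of_lt_opNorm hlt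
      have hkey : ‖opAdjoint A (z i) x‖ = |z i (A x)| := rfl
      rw [hkey] at hx2
      have hi₀ : i₀ ≤ i := le_trans (hj i₀ (Finset.mem_insert_self _ _)) hij
      rcases lt_abs.mp hx2 with hpos | hneg
      · refine ⟨(i, x), ⟨hi₀, hx1.le, hiV, hpos⟩, fun p hp => ?_⟩
        exact ⟨le_trans (hj p.1 (Finset.mem_insert_of_mem
          (Finset.mem_image_of_mem Prod.fst hp))) hij, hiS p hp⟩
      · refine ⟨(i, -x), ⟨hi₀, (norm_neg x ▸ hx1.le), hiV, ?_⟩, fun p hp => ?_⟩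
        · have : z i (A (-x)) = -(z i (A x)) := by simp
          rw [this]; linarith
        · exact ⟨le_trans (hj p.1 (Finset.mem_insert_of_mem
            (Finset.mem_image_of_mem Prod.fst hp))) hij, hiS p hp⟩)
  -- pigeonhole on the values of the functionals in `s`
  have hnorm1 : ∀ n : ℕ, ‖(f n).2‖ ≤ 1 := fun n => (hP n).2.1
  set Φ : ℕ → (↥s → ℤ) := fun n g => ⌊g.1 ((f n).2) / δ⌋ with hΦ
  have hmaps : Set.MapsTo Φ Set.univ
      (Set.pi Set.univ fun g : ↥s => Set.Icc (-⌈‖g.1‖ / δ⌉) ⌈‖g.1‖ / δ⌉) := by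
    intro n _ g _
    have hb : |g.1 ((f n).2)| ≤ ‖g.1‖ := by
      calc |g.1 ((f n).2)| ≤ ‖g.1‖ * ‖(f n).2‖ := g.1.le_opNorm _
        _ ≤ ‖g.1‖ * 1 := by
            exact mul_le_mul_of_nonneg_left (hnorm1 n) (norm_nonneg _)
        _ = ‖g.1‖ := mul_one _
    rw [abs_le] at hb
    constructor
    · calc -⌈‖g.1‖ / δ⌉ = ⌊-(‖g.1‖ / δ)⌋ := (Int.floor_neg).symm
        _ ≤ ⌊g.1 ((f n).2) / δ⌋ := by
            apply Int.floor_le_floor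
            rw [← neg_div]
            gcongr
            exact hb.1
    · calc ⌊g.1 ((f n).2) / δ⌋ ≤ ⌊‖g.1‖ / δ⌋ := by
            apply Int.floor_le_floor; gcongr; exact hb.2
        _ ≤ ⌈‖g.1‖ / δ⌉ := Int.floor_le_ceil _
  have hfin : (Set.pi Set.univ fun g : ↥s =>
      Set.Icc (-⌈‖g.1‖ / δ⌉) ⌈‖g.1‖ / δ⌉).Finite :=
    Set.Finite.pi fun g => Set.finite_Icc _ _
  obtain ⟨m, -, n, -, hmn, hΦeq⟩ :=
    Set.infinite_univ.exists_ne_map_eq_of_mapsTo hmaps hfin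
  -- symmetrize so that m < n
  have key : ∀ m n : ℕ, m < n → Φ m = Φ n →
      ∃ x ∈ Metric.closedBall (0 : X) 1 ∩ U, ∃ i : ι,
        i₀ ≤ i ∧ z i ∈ V ∧ ε / 2 - η < z i (A x) := by
    clear hmn hΦeq m n
    intro m n hmn hΦeq
    set a := (f m).2 with ha
    set b := (f n).2 with hb
    set i := (f n).1 with hi
    set x : X := (2⁻¹ : ℝ) • (b - a) with hx
    have hxball : x ∈ Metric.closedBall (0 : X) 1 := by
      rw [Metric.mem_closedBall, dist_zero_right, hx, norm_smul]
      have := hnorm1 m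
      have := hnorm1 n
      have h2 : ‖b - a‖ ≤ 2 := le_trans (norm_sub_le _ _)
        (show ‖(f n).2‖ + ‖(f m).2‖ ≤ 2 by linarith)
      rw [Real.norm_eq_abs]
      have h3 : |(2⁻¹ : ℝ)| = 2⁻¹ := by norm_num
      rw [h3]
      linarith
    have hxU : x ∈ U := by
      apply hsU
      intro g hg
      have hfl : ⌊g a / δ⌋ = ⌊g b / δ⌋ := congrFun hΦeq ⟨g, hg⟩
      have h1 : g a / δ - g b / δ = Int.fract (g a / δ) - Int.fract (g b / δ) := by
        rw [Int.fract, Int.fract, hfl]; ring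
      have h2 : |g a / δ - g b / δ| < 1 := by
        rw [h1, abs_sub_lt_iff]
        have := Int.fract_nonneg (g a / δ)
        have := Int.fract_lt_one (g a / δ)
        have := Int.fract_nonneg (g b / δ)
        have := Int.fract_lt_one (g b / δ)
        constructor <;> linarith
      have h3 : |g b - g a| < δ := by
        have hδne : δ ≠ 0 := ne_of_gt hδ
        have heq2 : g b - g a = (g b / δ - g a / δ) * δ := by field_simp
        rw [heq2, abs_mul, abs_of_pos hδ, abs_sub_comm]
        calc |g a / δ - g b / δ| * δ < 1 * δ := by
              exact mul_lt_mul_of_pos_right h2 hδ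
          _ = δ := one_mul _
      have h4 : g x = 2⁻¹ * (g b - g a) := by
        rw [hx, map_smul, map_sub, smul_eq_mul]
      rw [h4, abs_mul]
      have : |(2⁻¹ : ℝ)| = 2⁻¹ := by norm_num
      rw [this]
      nlinarith [abs_nonneg (g b - g a)]
    refine ⟨x, ⟨hxball, hxU⟩, i, (hP n).1, (hP n).2.2.1, ?_⟩
    have hbig : ε - η < z i (A b) := (hP n).2.2.2
    have hsmall : |z i (A a)| < η := (hr m n hmn).2
    rw [abs_lt] at hsmall
    have hval : z i (A x) = 2⁻¹ * (z i (A b) - z i (A a)) := by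
      rw [hx, map_smul, map_smul, map_sub, map_sub, smul_eq_mul]
    rw [hval]
    linarith
  rcases hmn.lt_or_gt with h | h
  · exact key m n h hΦeq
  · exact key n m h hΦeq.symm
end
end

section
/- Let X and Y be real Banach spaces and A : X → Y a bounded linear operator with ‖A‖ ≤ 1. Fix D ≥ 1 and β ∈ (0,1) such that for every x ∈ B_X and every sequence (x_k) ⊆ B_X with inf_{j≠k} ‖A x_j − A x_k‖ ≥ 2/D, there exists k with ‖x + x_k‖ ≤ 2(1 − β). If n ≥ 1 and f : T_{2^n} → X satisfies d(s,t)/D ≤ ‖A f(s) − A f(t)‖ ≤ ‖f(s) − f(t)‖ ≤ d(s,t) for all s, t ∈ T_{2^n}, then D ≥ (1 − β)^{−n}. (Consequently, if A has property (β), the family of trees T_m does not factor through A with any uniform distortion.) -/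
open Filter Topology Pointwise NormedSpace

noncomputable section

variable {X Y : Type*} [NormedAddCommGroup X] [NormedSpace ℝ X] [CompleteSpace X]
  [NormedAddCommGroup Y] [NormedSpace ℝ Y] [CompleteSpace Y]

/-- Longest common initial segment (prefix) of two finite sequences. -/
def lcp : List ℕ → List ℕ → List ℕ
  | a :: s, b :: t => if a = b then a :: lcp s t else []
  | _, _ => []

/-- The graph distance on the tree `T` of all finite sequences of naturals:
`d(s,t) = |s| + |t| - 2|u|`, `u` the longest common initial segment. -/
def treeDist (s t : List ℕ) : ℕ := s.length + t.length - 2 * (lcp s t).length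

lemma lcp_self_append (s l : List ℕ) : lcp s (s ++ l) = s := by
  induction s with
  | nil => cases l <;> rfl
  | cons a s ih => simp [lcp, ih]

lemma lcp_ne (v : List ℕ) {a b : ℕ} (h : a ≠ b) (p q : List ℕ) :
    lcp (v ++ a :: p) (v ++ b :: q) = v := by
  induction v with
  | nil => simp [lcp, h]
  | cons c v ih => simp [lcp, ih]

lemma treeDist_self_append (s l : List ℕ) : treeDist s (s ++ l) = l.length := by
  rw [treeDist, lcp_self_append, List.length_append]
  omega

lemma treeDist_ne (v : List ℕ) {a b : ℕ} (h : a ≠ b) (p q : List ℕ) :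
    treeDist (v ++ a :: p) (v ++ b :: q) = p.length + q.length + 2 := by
  rw [treeDist, lcp_ne v h p q, List.length_append, List.length_append,
    List.length_cons, List.length_cons]
  omega

/-- the Baudier–Zheng/Kloeckner argument: if `A` has the property (β)
estimate with constant `β` at separation `2/D` and `f : T_{2^n} → X` is a factorization
of the tree `T_{2^n}` through `A` with distortion `D`, then `D ≥ (1−β)^{−n}`. -/
theorem statement9 (A : X →L[ℝ] Y) (hA : ‖A‖ ≤ 1) (D β : ℝ)
    (hD : 1 ≤ D) (hβ0 : 0 < β) (hβ1 : β < 1)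
    (hbeta : ∀ x : X, ‖x‖ ≤ 1 → ∀ xs : ℕ → X, (∀ k, ‖xs k‖ ≤ 1) →
      (∀ j k, j ≠ k → 2 / D ≤ ‖A (xs j) - A (xs k)‖) →
      ∃ k, ‖x + xs k‖ ≤ 2 * (1 - β))
    (n : ℕ) (hn : 1 ≤ n) (f : List ℕ → X)
    (hf : ∀ s t : List ℕ, s.length ≤ 2 ^ n → t.length ≤ 2 ^ n →
      (treeDist s t : ℝ) / D ≤ ‖A (f s) - A (f t)‖ ∧
      ‖A (f s) - A (f t)‖ ≤ ‖f s - f t‖ ∧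
      ‖f s - f t‖ ≤ (treeDist s t : ℝ)) :
    ((1 - β)⁻¹) ^ n ≤ D := by
  have hβlt : (0:ℝ) < 1 - β := by linarith
  have hD0 : (0:ℝ) < D := by linarith
  -- Key self-improvement claim, by induction on `i`:
  -- below any node `s` with room `2^i`, through any child direction `k₀`, there is a
  -- descendant at tree-distance `2^i` whose image is within `2^i (1-β)^i` of `f s`.
  have key : ∀ i : ℕ, ∀ s : List ℕ, s.length + 2 ^ i ≤ 2 ^ n → ∀ k₀ : ℕ,
      ∃ l : List ℕ, l.length + 1 = 2 ^ i ∧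
        ‖f (s ++ k₀ :: l) - f s‖ ≤ (2:ℝ) ^ i * (1 - β) ^ i := by
    intro i
    induction i with
    | zero =>
      intro s hs k₀
      refine ⟨[], by norm_num, ?_⟩
      have h := (hf s (s ++ [k₀]) (by omega)
        (by simp only [List.length_append, List.length_cons, List.length_nil]; omega)).2.2
      rw [treeDist_self_append] at h
      rw [norm_sub_rev]
      simpa using h
    | succ i ih =>
      intro s hs k₀
      have hpow : 2 ^ i + 2 ^ i = 2 ^ (i + 1) := by ring
      have hs' : s.length + 2 ^ i ≤ 2 ^ n :=
        le_trans (Nat.add_le_add_left (Nat.pow_le_pow_right (by norm_num) (Nat.le_succ i)) _) hs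
      obtain ⟨l, hl, hvb⟩ := ih s hs' k₀
      set v : List ℕ := s ++ k₀ :: l with hv
      have hvlen : v.length = s.length + 2 ^ i := by
        rw [hv, List.length_append, List.length_cons]; omega
      have hv' : v.length + 2 ^ i ≤ 2 ^ n := by omega
      choose m hm hmb using ih v hv'
      set t : ℝ := (2:ℝ) ^ i * (1 - β) ^ i with ht
      have ht0 : (0:ℝ) < t := by positivity
      have hnorm : ∀ w : X, ‖t⁻¹ • w‖ = ‖w‖ / t := by
        intro w
        rw [norm_smul, norm_inv, Real.norm_eq_abs, abs_of_pos ht0]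
        ring
      set x : X := t⁻¹ • (f v - f s) with hx
      set xs : ℕ → X := fun k => t⁻¹ • (f (v ++ k :: m k) - f v) with hxs
      have hxle : ‖x‖ ≤ 1 := by
        rw [hx, hnorm, div_le_one ht0]; exact hvb
      have hxsle : ∀ k, ‖xs k‖ ≤ 1 := by
        intro k
        show ‖t⁻¹ • (f (v ++ k :: m k) - f v)‖ ≤ 1
        rw [hnorm, div_le_one ht0]; exact hmb k
      have hulen : ∀ k, (v ++ k :: m k).length ≤ 2 ^ n := by
        intro k
        rw [List.length_append, List.length_cons]
        have := hm k
        omega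
      have hsep : ∀ j k, j ≠ k → 2 / D ≤ ‖A (xs j) - A (xs k)‖ := by
        intro j k hjk
        have hAeq : A (xs j) - A (xs k)
            = t⁻¹ • (A (f (v ++ j :: m j)) - A (f (v ++ k :: m k))) := by
          show A (t⁻¹ • (f (v ++ j :: m j) - f v)) - A (t⁻¹ • (f (v ++ k :: m k) - f v)) = _
          rw [map_smul, map_smul, map_sub, map_sub, ← smul_sub]
          congr 1
          abel
        have hd := (hf (v ++ j :: m j) (v ++ k :: m k) (hulen j) (hulen k)).1
        have htd : treeDist (v ++ j :: m j) (v ++ k :: m k) = 2 ^ (i + 1) := by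
          rw [treeDist_ne v hjk]
          have := hm j; have := hm k
          omega
        rw [htd] at hd
        have hcast : ((2 ^ (i + 1) : ℕ) : ℝ) = (2:ℝ) ^ (i + 1) := by push_cast; ring
        rw [hcast] at hd
        have hnormY : ‖A (xs j) - A (xs k)‖
            = ‖A (f (v ++ j :: m j)) - A (f (v ++ k :: m k))‖ / t := by
          rw [hAeq, norm_smul, norm_inv, Real.norm_eq_abs, abs_of_pos ht0]; ring
        rw [hnormY]
        have h1 : (2:ℝ) ^ (i + 1) / D / t
            ≤ ‖A (f (v ++ j :: m j)) - A (f (v ++ k :: m k))‖ / t := by gcongr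
        refine le_trans ?_ h1
        have hp0 : (0:ℝ) < (1 - β) ^ i := by positivity
        have hpe : (2:ℝ) ^ (i + 1) / D / t = 2 / ((1 - β) ^ i * D) := by
          rw [ht]; field_simp; ring
        rw [hpe, div_le_div_iff₀ hD0 (by positivity)]
        have hp1 : (1 - β) ^ i ≤ 1 := pow_le_one₀ hβlt.le (by linarith)
        nlinarith
      obtain ⟨k, hk⟩ := hbeta x hxle xs hxsle hsep
      refine ⟨l ++ k :: m k, ?_, ?_⟩
      · rw [List.length_append, List.length_cons]
        have := hm k
        omega
      · have hassoc : s ++ k₀ :: (l ++ k :: m k) = v ++ k :: m k := by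
          rw [hv]; simp
        rw [hassoc]
        have hsum : x + xs k = t⁻¹ • (f (v ++ k :: m k) - f s) := by
          rw [hx]
          show t⁻¹ • (f v - f s) + t⁻¹ • (f (v ++ k :: m k) - f v) = _
          rw [← smul_add]
          congr 1
          abel
        rw [hsum, hnorm, div_le_iff₀ ht0] at hk
        calc ‖f (v ++ k :: m k) - f s‖ ≤ 2 * (1 - β) * t := hk
        _ = (2:ℝ) ^ (i + 1) * (1 - β) ^ (i + 1) := by rw [ht]; ring
  -- Apply the claim at the root with `i = n`.
  obtain ⟨l, hl, hb⟩ := key n [] (by simp) 0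
  have hulen : ((0:ℕ) :: l).length ≤ 2 ^ n := by
    rw [List.length_cons]; omega
  have h1 := (hf [] ((0:ℕ) :: l) (by simp) hulen).1
  have h2 := (hf [] ((0:ℕ) :: l) (by simp) hulen).2.1
  have htd : treeDist [] ((0:ℕ) :: l) = 2 ^ n := by
    have := treeDist_self_append [] ((0:ℕ) :: l)
    rw [List.nil_append] at this
    rw [this, List.length_cons]
    omega
  rw [htd] at h1
  have hb' : ‖f [] - f ((0:ℕ) :: l)‖ ≤ (2:ℝ) ^ n * (1 - β) ^ n := by
    have heq : ([] : List ℕ) ++ (0:ℕ) :: l = (0:ℕ) :: l := List.nil_append _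
    rw [heq] at hb
    rw [norm_sub_rev]
    exact hb
  have hchain : ((2 ^ n : ℕ) : ℝ) / D ≤ (2:ℝ) ^ n * (1 - β) ^ n :=
    le_trans h1 (le_trans h2 hb')
  have hcast : ((2 ^ n : ℕ) : ℝ) = (2:ℝ) ^ n := by push_cast; ring
  rw [hcast] at hchain
  have h2n : (0:ℝ) < (2:ℝ) ^ n := by positivity
  have hfin : D⁻¹ ≤ (1 - β) ^ n := by
    rw [div_le_iff₀ hD0] at hchain
    rw [inv_le_iff_one_le_mul₀ hD0]
    nlinarith
  rw [inv_pow, inv_le_comm₀ (by positivity) hD0]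
  exact hfin
end
end

section
/- With the notation of the tree construction lemma (Lemma 6.2 of the paper): let ε, δ > 0 and let (x_t)_{t∈T} ⊆ B_X, (y*_t)_{t∈T} ⊆ B_{Y*}, (x**_t)_{t∈T} ⊆ B_{X**} satisfy x_∅ = y*_∅ = x**_∅ = 0 and conditions (i)–(v) of that lemma (with respect to the bijection N, the functions ℓ, L, and the bounds δ/2^{3L(t)+2}). Then: (1) for every i ∈ ℕ and every nonempty segment 𝔰 ⊆ L_i, if v is the ≺-minimal member of 𝔰 then Σ_{w∈𝔰} x**_w(A* y*_v) ≥ (ε − 3δ)|𝔰| and Σ_{w∈𝔰} y*_v(A x_w) ≥ (ε − 3δ)|𝔰|; (2) for every i and every nonempty segment 𝔰 ⊆ L_i, if v is the ≺-maximal member of 𝔰 then Σ_{w∈𝔰} x**_v(A* y*_w) ≥ (ε − 3δ)|𝔰|; (3) if v, w ∈ T are incomparable under ≺ or ℓ(w) ≠ ℓ(v), then |x**_w(A* y*_v)| < δ/2^{max{ℓ(v),ℓ(w)}} and |y*_v(A x_w)| < δ/2^{max{ℓ(v),ℓ(w)}}; (4) for any segment 𝔰 and any v ∈ T such that 𝔰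 ⊏ v, v ⊏ 𝔰, or 𝔰 ⊥ v, the sums Σ_{w∈𝔰} |x**_w(A* y*_v)|, Σ_{w∈𝔰} |y*_v(A x_w)|, and Σ_{w∈𝔰} |x**_v(A* y*_w)| are each less than δ. -/
open Filter Topology Pointwise NormedSpace

noncomputable section

variable {X Y : Type*} [NormedAddCommGroup X] [NormedSpace ℝ X] [CompleteSpace X]
  [NormedAddCommGroup Y] [NormedSpace ℝ Y] [CompleteSpace Y]

/-- The segment `[u, t] = {w : u ⪯ w ⪯ t}` of the tree `T = List ℕ` (here `⪯` is the
initial-segment order), realized as a finite set when `u <+: t`. -/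
def seg (u t : List ℕ) : Finset (List ℕ) :=
  (Finset.Icc u.length t.length).image fun k => t.take k

set_option maxHeartbeats 2000000 in
/-- Proposition 6.4 of the paper: the estimates satisfied by the
collections produced by the tree construction lemma (Lemma 6.2); `N` is a bijective
enumeration of `T` compatible with the prefix order, `ℓ t = max{n : 2^n − 1 ≤ |t|}`,
`L t = max{ℓ s : N s ≤ N t}`, and the level sets are `L_i = {t : ℓ t = i}`. -/
theorem statement14 (A : X →L[ℝ] Y) (ε δ : ℝ) (hε : 0 < ε) (hδ : 0 < δ)
    (N : List ℕ → ℕ) (hNbij : Function.Bijective N)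
    (hNmono : ∀ s t : List ℕ, s <+: t → s ≠ t → N s < N t)
    (ℓ L : List ℕ → ℕ)
    (hℓ : ∀ t : List ℕ, IsGreatest {n : ℕ | 2 ^ n - 1 ≤ t.length} (ℓ t))
    (hL : ∀ t : List ℕ, IsGreatest {m : ℕ | ∃ s : List ℕ, N s ≤ N t ∧ ℓ s = m} (L t))
    (x : List ℕ → X) (ys : List ℕ → StrongDual ℝ Y) (xss : List ℕ → StrongDual ℝ (StrongDual ℝ X))
    (hxb : ∀ t, ‖x t‖ ≤ 1) (hysb : ∀ t, ‖ys t‖ ≤ 1) (hxssb : ∀ t, ‖xss t‖ ≤ 1)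
    (hx0 : x [] = 0) (hys0 : ys [] = 0) (hxss0 : xss [] = 0)
    (h1 : ∀ t : List ℕ, t ≠ [] → ε - δ < xss t (opAdjoint A (ys t)))
    (h2 : ∀ t s : List ℕ, s ≠ [] → N s < N t →
      |xss s (opAdjoint A (ys t))| < δ / 2 ^ (3 * L t + 2) ∧
      |ys t (A (x s))| < δ / 2 ^ (3 * L t + 2))
    (h3 : ∀ t : List ℕ, (∃ n : ℕ, t.length = 2 ^ n - 1) →
      ∀ s : List ℕ, s ≠ [] → N s < N t →
        |xss t (opAdjoint A (ys s))| < δ / 2 ^ (3 * L t + 2))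
    (h4 : ∀ t : List ℕ, (∃ n : ℕ, 2 ^ n - 1 < t.length ∧ t.length < 2 ^ (n + 1) - 1) →
      ∀ s : List ℕ, s ≠ [] → N s < N t →
        |xss t (opAdjoint A (ys s)) - xss t.dropLast (opAdjoint A (ys s))| <
          δ / 2 ^ (3 * L t + 2))
    (h5 : ∀ t s : List ℕ, s ≠ [] → N s ≤ N t →
      |xss t (opAdjoint A (ys s)) - ys s (A (x t))| < δ / 2 ^ (3 * L t + 2)) :
    (∀ i : ℕ, 1 ≤ i → ∀ u t : List ℕ, u <+: t → (∀ w ∈ seg u t, ℓ w = i) →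
      (ε - 3 * δ) * (seg u t).card ≤ ∑ w ∈ seg u t, xss w (opAdjoint A (ys u)) ∧
      (ε - 3 * δ) * (seg u t).card ≤ ∑ w ∈ seg u t, ys u (A (x w))) ∧
    (∀ i : ℕ, 1 ≤ i → ∀ u t : List ℕ, u <+: t → (∀ w ∈ seg u t, ℓ w = i) →
      (ε - 3 * δ) * (seg u t).card ≤ ∑ w ∈ seg u t, xss t (opAdjoint A (ys w))) ∧
    (∀ v w : List ℕ, ((¬ v <+: w ∧ ¬ w <+: v) ∨ ℓ w ≠ ℓ v) →
      |xss w (opAdjoint A (ys v))| < δ / 2 ^ max (ℓ v) (ℓ w) ∧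
      |ys v (A (x w))| < δ / 2 ^ max (ℓ v) (ℓ w)) ∧
    (∀ u t : List ℕ, u <+: t → ∀ v : List ℕ,
      ((∀ w ∈ seg u t, (w <+: v ∧ w ≠ v) ∧ ℓ w < ℓ v) ∨
       (∀ w ∈ seg u t, (v <+: w ∧ v ≠ w) ∧ ℓ v < ℓ w) ∨
       (∀ w ∈ seg u t, ¬ w <+: v ∧ ¬ v <+: w)) →
      (∑ w ∈ seg u t, |xss w (opAdjoint A (ys v))|) < δ ∧
      (∑ w ∈ seg u t, |ys v (A (x w))|) < δ ∧
      (∑ w ∈ seg u t, |xss v (opAdjoint A (ys w))|) < δ) := by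
  classical
  have hinj : Function.Injective N := hNbij.1
  have hδ0 : (0:ℝ) ≤ δ := hδ.le
  have powpos : ∀ m : ℕ, (0:ℝ) < 2 ^ m := fun m => by positivity
  have ℓlen : ∀ s : List ℕ, 2 ^ ℓ s ≤ s.length + 1 := by
    intro s
    have h := (hℓ s).1
    simp only [Set.mem_setOf_eq] at h
    omega
  have ℓlt : ∀ s : List ℕ, s.length + 1 < 2 ^ (ℓ s + 1) := by
    intro s
    by_contra h
    push_neg at h
    have : ℓ s + 1 ≤ ℓ s := (hℓ s).2 (by simp only [Set.mem_setOf_eq]; omega)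
    omega
  have ℓmem : ∀ (s : List ℕ) (n : ℕ), 2 ^ n ≤ s.length + 1 → n ≤ ℓ s := by
    intro s n h
    exact (hℓ s).2 (by simp only [Set.mem_setOf_eq]; omega)
  have ℓnil : ℓ ([] : List ℕ) = 0 := by
    have h := ℓlen []
    by_contra hne
    have h2' : (2:ℕ) ^ 1 ≤ 2 ^ ℓ ([] : List ℕ) := Nat.pow_le_pow_right (by norm_num) (by omega)
    simp only [List.length_nil] at h
    omega
  have ℓpos : ∀ s : List ℕ, s ≠ [] → 1 ≤ ℓ s := by
    intro s hs
    refine ℓmem s 1 ?_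
    have : 0 < s.length := List.length_pos_iff.mpr hs
    omega
  have ℓmono : ∀ s t : List ℕ, s.length ≤ t.length → ℓ s ≤ ℓ t := by
    intro s t h
    exact ℓmem t (ℓ s) (le_trans (ℓlen s) (by omega))
  have Lge : ∀ s t : List ℕ, N s ≤ N t → ℓ s ≤ L t := fun s t h => (hL t).2 ⟨s, h, rfl⟩
  have Lself : ∀ t : List ℕ, ℓ t ≤ L t := fun t => Lge t t le_rfl
  have dmono : ∀ {m n : ℕ}, m ≤ n → δ / 2 ^ n ≤ δ / 2 ^ m := by
    intro m n h
    gcongr <;> first | norm_num | exact h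
  have telA : ∀ n : ℕ, ∀ a b : List ℕ, a.length ≤ n → b ≠ [] → b <+: a → ℓ b = ℓ a →
      ε - δ - ((a.length - b.length : ℕ) : ℝ) * (δ / 2 ^ (3 * ℓ a + 2)) ≤
        xss a (opAdjoint A (ys b)) := by
    intro n
    induction n with
    | zero =>
      intro a b hlen hb hpre _
      have ha : a = [] := List.length_eq_zero_iff.mp (by omega)
      subst ha
      exact absurd (List.prefix_nil.mp hpre) hb
    | succ n ih =>
      intro a b hlen hb hpre hl
      rcases eq_or_ne b a with rfl | hne
      · have h := h1 b hb
        have h0 : ((b.length - b.length : ℕ) : ℝ) = 0 := by simp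
        rw [h0]
        linarith
      · have hblt : b.length < a.length :=
          lt_of_le_of_ne hpre.length_le (fun h => hne (hpre.eq_of_length h))
        have ha : a ≠ [] := by
          intro h; rw [h] at hblt; simp at hblt
        have hd_len : a.dropLast.length = a.length - 1 := List.length_dropLast
        have hb_take : b = a.take b.length := List.prefix_iff_eq_take.mp hpre
        have hbd : b <+: a.dropLast := by
          rw [List.dropLast_eq_take]
          rw [hb_take]
          exact List.take_isPrefix_take.mpr (Or.inl (by omega))
        have h2a : 2 ^ ℓ a ≤ b.length + 1 := by
          have h' := ℓlen b
          rw [hl] at h'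
          exact h'
        have hld : ℓ a.dropLast = ℓ a := by
          refine le_antisymm (ℓmono _ _ (by omega)) (ℓmem _ _ (by omega))
        have hNb : N b < N a := hNmono b a hpre hne
        have hmid : ∃ m : ℕ, 2 ^ m - 1 < a.length ∧ a.length < 2 ^ (m + 1) - 1 := by
          refine ⟨ℓ a, by omega, ?_⟩
          have := ℓlt a
          omega
        have hstep : |xss a (opAdjoint A (ys b)) - xss a.dropLast (opAdjoint A (ys b))| ≤
            δ / 2 ^ (3 * ℓ a + 2) :=
          le_trans (h4 a hmid b hb hNb).le (dmono (by have := Lself a; omega))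
        have hih := ih a.dropLast b (by omega) hb hbd (by rw [hld]; exact hl)
        rw [hld] at hih
        have habs := abs_le.mp hstep
        have hc : a.length - b.length = (a.dropLast.length - b.length) + 1 := by omega
        rw [hc]
        push_cast
        linarith [habs.1, habs.2, hih]
  have telB : ∀ n : ℕ, ∀ a s : List ℕ, a.length ≤ n → s ≠ [] → a ≠ [] → N s < N a →
      (s <+: a → s.length + 1 < 2 ^ ℓ a) →
      |xss a (opAdjoint A (ys s))| ≤
        ((a.length + 2 - 2 ^ ℓ a : ℕ) : ℝ) * (δ / 2 ^ (3 * max (ℓ s) (ℓ a) + 2)) := by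
    intro n
    induction n with
    | zero =>
      intro a s hlen _ ha _ _
      exact absurd (List.length_eq_zero_iff.mp (by omega)) ha
    | succ n ih =>
      intro a s hlen hs ha hN hH
      have hla : 1 ≤ ℓ a := ℓpos a ha
      have hlen2 : 2 ^ ℓ a ≤ a.length + 1 := ℓlen a
      have hbound : δ / 2 ^ (3 * L a + 2) ≤ δ / 2 ^ (3 * max (ℓ s) (ℓ a) + 2) := by
        refine dmono ?_
        have h1' := Lge s a hN.le
        have h2' := Lself a
        omega
      rcases eq_or_lt_of_le hlen2 with hcrit | hstrict
      · have hc3 := h3 a ⟨ℓ a, by omega⟩ s hs hN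
        have hone : (a.length + 2 - 2 ^ ℓ a : ℕ) = 1 := by omega
        rw [hone]
        simp only [Nat.cast_one, one_mul]
        linarith [hc3, hbound]
      · have hstrict' : 2 ^ ℓ a ≤ a.length := by omega
        have hd_len : a.dropLast.length = a.length - 1 := List.length_dropLast
        have h2ℓ : (2:ℕ) ≤ 2 ^ ℓ a := by
          calc (2:ℕ) = 2 ^ 1 := rfl
          _ ≤ 2 ^ ℓ a := Nat.pow_le_pow_right (by norm_num) hla
        have hd_ne : a.dropLast ≠ [] := by
          intro h
          have h0 : a.dropLast.length = 0 := by rw [h]; rfl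
          omega
        have hld : ℓ a.dropLast = ℓ a :=
          le_antisymm (ℓmono _ _ (by omega)) (ℓmem _ _ (by omega))
        have hdp : a.dropLast <+: a := List.dropLast_prefix a
        have hmid : ∃ m : ℕ, 2 ^ m - 1 < a.length ∧ a.length < 2 ^ (m + 1) - 1 := by
          refine ⟨ℓ a, by omega, ?_⟩
          have := ℓlt a
          omega
        have hstep : |xss a (opAdjoint A (ys s)) - xss a.dropLast (opAdjoint A (ys s))| ≤
            δ / 2 ^ (3 * max (ℓ s) (ℓ a) + 2) :=
          le_trans (h4 a hmid s hs hN).le hbound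
        have hd_ne_s : a.dropLast ≠ s := by
          intro h
          have hsa : s <+: a := h ▸ hdp
          have h' := hH hsa
          have h'' : s.length = a.length - 1 := by rw [← h, hd_len]
          omega
        have htri : |xss a (opAdjoint A (ys s))| ≤
            |xss a (opAdjoint A (ys s)) - xss a.dropLast (opAdjoint A (ys s))| +
              |xss a.dropLast (opAdjoint A (ys s))| := by
          have h' := abs_add_le (xss a (opAdjoint A (ys s)) - xss a.dropLast (opAdjoint A (ys s)))
            (xss a.dropLast (opAdjoint A (ys s)))
          simpa using h'
        have hpos : (0:ℝ) ≤ δ / 2 ^ (3 * max (ℓ s) (ℓ a) + 2) := by positivity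
        rcases (show N a.dropLast ≠ N s from fun hh => hd_ne_s (hinj hh)).lt_or_gt with hNds | hNsd
        · have hds := (h2 s a.dropLast hd_ne hNds).1
          have hb2 : δ / 2 ^ (3 * L s + 2) ≤ δ / 2 ^ (3 * max (ℓ s) (ℓ a) + 2) := by
            refine dmono ?_
            have h1' := Lself s
            have h2' := Lge a.dropLast s hNds.le
            rw [hld] at h2'
            omega
          have hcard : (2:ℕ) ≤ a.length + 2 - 2 ^ ℓ a := by omega
          have hcard' : (2:ℝ) ≤ ((a.length + 2 - 2 ^ ℓ a : ℕ) : ℝ) := by exact_mod_cast hcard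
          have : |xss a (opAdjoint A (ys s))| ≤ 2 * (δ / 2 ^ (3 * max (ℓ s) (ℓ a) + 2)) := by
            linarith [hds.le.trans hb2]
          calc |xss a (opAdjoint A (ys s))| ≤ 2 * (δ / 2 ^ (3 * max (ℓ s) (ℓ a) + 2)) := this
          _ ≤ ((a.length + 2 - 2 ^ ℓ a : ℕ) : ℝ) * (δ / 2 ^ (3 * max (ℓ s) (ℓ a) + 2)) :=
            mul_le_mul_of_nonneg_right hcard' hpos
        · have hH' : s <+: a.dropLast → s.length + 1 < 2 ^ ℓ a.dropLast := by
            intro hsd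
            rw [hld]
            exact hH (hsd.trans hdp)
          have hih := ih a.dropLast s (by omega) hs hd_ne hNsd hH'
          rw [hld] at hih
          have hcnt : a.length + 2 - 2 ^ ℓ a = (a.dropLast.length + 2 - 2 ^ ℓ a) + 1 := by omega
          calc |xss a (opAdjoint A (ys s))| ≤
              δ / 2 ^ (3 * max (ℓ s) (ℓ a) + 2) +
                ((a.dropLast.length + 2 - 2 ^ ℓ a : ℕ) : ℝ) *
                  (δ / 2 ^ (3 * max (ℓ s) (ℓ a) + 2)) := by linarith
          _ = ((a.length + 2 - 2 ^ ℓ a : ℕ) : ℝ) * (δ / 2 ^ (3 * max (ℓ s) (ℓ a) + 2)) := by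
              rw [hcnt]
              push_cast
              ring
  have telB2 : ∀ a s : List ℕ, s ≠ [] → a ≠ [] → N s < N a →
      (s <+: a → s.length + 1 < 2 ^ ℓ a) →
      |xss a (opAdjoint A (ys s))| ≤ δ / 2 ^ (2 * max (ℓ s) (ℓ a) + 2) := by
    intro a s hs ha hN hH
    have h := telB a.length a s le_rfl hs ha hN hH
    have hcnt : a.length + 2 - 2 ^ ℓ a ≤ 2 ^ ℓ a := by
      have h1' := ℓlt a
      have h2' : 2 ^ (ℓ a + 1) = 2 * 2 ^ ℓ a := by rw [pow_succ]; ring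
      omega
    have hMa : ℓ a ≤ max (ℓ s) (ℓ a) := le_max_right _ _
    have hle : ((a.length + 2 - 2 ^ ℓ a : ℕ) : ℝ) ≤ 2 ^ max (ℓ s) (ℓ a) := by
      have h2' : (2:ℕ) ^ ℓ a ≤ 2 ^ max (ℓ s) (ℓ a) := Nat.pow_le_pow_right (by norm_num) hMa
      exact_mod_cast le_trans hcnt h2'
    have hid : (2:ℝ) ^ (3 * max (ℓ s) (ℓ a) + 2) =
        2 ^ max (ℓ s) (ℓ a) * 2 ^ (2 * max (ℓ s) (ℓ a) + 2) := by
      rw [show 3 * max (ℓ s) (ℓ a) + 2 = max (ℓ s) (ℓ a) + (2 * max (ℓ s) (ℓ a) + 2) by omega,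
        pow_add]
    calc |xss a (opAdjoint A (ys s))| ≤
        ((a.length + 2 - 2 ^ ℓ a : ℕ) : ℝ) * (δ / 2 ^ (3 * max (ℓ s) (ℓ a) + 2)) := h
    _ ≤ 2 ^ max (ℓ s) (ℓ a) * (δ / 2 ^ (3 * max (ℓ s) (ℓ a) + 2)) :=
        mul_le_mul_of_nonneg_right hle (by positivity)
    _ = δ / 2 ^ (2 * max (ℓ s) (ℓ a) + 2) := by
        rw [hid]
        have hp1 : ((2:ℝ) ^ max (ℓ s) (ℓ a)) ≠ 0 := (powpos _).ne'
        have hp2 : ((2:ℝ) ^ (2 * max (ℓ s) (ℓ a) + 2)) ≠ 0 := (powpos _).ne'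
        field_simp
  have hsplit : ∀ M : ℕ, 1 ≤ M → δ / 2 ^ (3 * M + 2) ≤ 1 / 2 * (δ / 2 ^ (2 * M + 2)) := by
    intro M hM1
    have e2 : 1 / 2 * (δ / 2 ^ (2 * M + 2)) = δ / 2 ^ (2 * M + 3) := by
      rw [show 2 * M + 3 = (2 * M + 2) + 1 by omega, pow_succ]
      ring
    rw [e2]
    exact dmono (by omega)
  have preeq : ∀ v w : List ℕ, v <+: w → w <+: v → v = w := by
    intro v w h1' h2'
    exact h1'.eq_of_length (le_antisymm h1'.length_le h2'.length_le)
  have keyC : ∀ v w : List ℕ, v ≠ [] → w ≠ [] →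
      ((¬ v <+: w ∧ ¬ w <+: v) ∨ (w <+: v ∧ ℓ w < ℓ v) ∨ (v <+: w ∧ ℓ v < ℓ w)) →
      |xss w (opAdjoint A (ys v))| ≤ 3 / 2 * (δ / 2 ^ (2 * max (ℓ v) (ℓ w) + 2)) ∧
      |ys v (A (x w))| ≤ 3 / 2 * (δ / 2 ^ (2 * max (ℓ v) (ℓ w) + 2)) ∧
      |xss v (opAdjoint A (ys w))| ≤ 3 / 2 * (δ / 2 ^ (2 * max (ℓ v) (ℓ w) + 2)) := by
    intro v w hv hw hrel
    have hM1 : 1 ≤ max (ℓ v) (ℓ w) := le_trans (ℓpos v hv) (le_max_left _ _)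
    have hvw : v ≠ w := by
      rcases hrel with ⟨h1', _⟩ | ⟨_, h'⟩ | ⟨_, h'⟩
      · exact fun he => h1' (he ▸ List.prefix_refl _)
      · intro he; rw [he] at h'; omega
      · intro he; rw [he] at h'; omega
    have c0 : (0:ℝ) ≤ δ / 2 ^ (2 * max (ℓ v) (ℓ w) + 2) := by positivity
    have c3M : δ / 2 ^ (3 * max (ℓ v) (ℓ w) + 2) ≤
        1 / 2 * (δ / 2 ^ (2 * max (ℓ v) (ℓ w) + 2)) := hsplit _ hM1
    rcases (show N v ≠ N w from fun hh => hvw (hinj hh)).lt_or_gt with hNvw | hNwv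
    · -- N v < N w : telescope on w
      have hH : v <+: w → v.length + 1 < 2 ^ ℓ w := by
        intro hp
        rcases hrel with ⟨h1', _⟩ | ⟨hp', hlt⟩ | ⟨_, hlvw⟩
        · exact absurd hp h1'
        · exact absurd (congrArg ℓ (preeq v w hp hp')) (by omega)
        · calc v.length + 1 < 2 ^ (ℓ v + 1) := ℓlt v
          _ ≤ 2 ^ ℓ w := Nat.pow_le_pow_right (by norm_num) (by omega)
      have q1 := telB2 w v hv hw hNvw hH
      have hb5 : δ / 2 ^ (3 * L w + 2) ≤ δ / 2 ^ (3 * max (ℓ v) (ℓ w) + 2) := by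
        refine dmono ?_
        have := Lself w
        have := Lge v w hNvw.le
        omega
      have q2' := (h5 w v hv hNvw.le).le.trans (hb5.trans c3M)
      have q3' := (h2 w v hv hNvw).1.le.trans (hb5.trans c3M)
      have habs := abs_sub_abs_le_abs_sub (ys v (A (x w))) (xss w (opAdjoint A (ys v)))
      rw [abs_sub_comm] at habs
      refine ⟨by linarith, by linarith, by linarith⟩
    · -- N w < N v
      have hH : w <+: v → w.length + 1 < 2 ^ ℓ v := by
        intro hp
        rcases hrel with ⟨_, h2'⟩ | ⟨_, hlt⟩ | ⟨hp', hlvw⟩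
        · exact absurd hp h2'
        · calc w.length + 1 < 2 ^ (ℓ w + 1) := ℓlt w
          _ ≤ 2 ^ ℓ v := Nat.pow_le_pow_right (by norm_num) (by omega)
        · exact absurd (congrArg ℓ (preeq v w hp' hp)) (by omega)
      have q3 := telB2 v w hw hv hNwv hH
      rw [max_comm (ℓ w) (ℓ v)] at q3
      have hbv : δ / 2 ^ (3 * L v + 2) ≤ δ / 2 ^ (3 * max (ℓ v) (ℓ w) + 2) := by
        refine dmono ?_
        have := Lself v
        have := Lge w v hNwv.le
        omega
      have q1 := (h2 v w hw hNwv).1.le.trans (hbv.trans c3M)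
      have q2 := (h2 v w hw hNwv).2.le.trans (hbv.trans c3M)
      refine ⟨by linarith, by linarith, by linarith⟩
  have mem_seg : ∀ u t w : List ℕ, w ∈ seg u t ↔
      ∃ k, (u.length ≤ k ∧ k ≤ t.length) ∧ w = t.take k := by
    intro u t w
    constructor
    · intro h
      rcases Finset.mem_image.mp h with ⟨k, hk, he⟩
      exact ⟨k, Finset.mem_Icc.mp hk, he.symm⟩
    · rintro ⟨k, hk, rfl⟩
      exact Finset.mem_image.mpr ⟨k, Finset.mem_Icc.mpr hk, rfl⟩
  have part1 : ∀ i : ℕ, 1 ≤ i → ∀ u t : List ℕ, u <+: t → (∀ w ∈ seg u t, ℓ w = i) →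
      (ε - 3 * δ) * (seg u t).card ≤ ∑ w ∈ seg u t, xss w (opAdjoint A (ys u)) ∧
      (ε - 3 * δ) * (seg u t).card ≤ ∑ w ∈ seg u t, ys u (A (x w)) := by
    intro i hi u t hut hlev
    have hu_mem : u ∈ seg u t :=
      (mem_seg u t u).mpr ⟨u.length, ⟨le_rfl, hut.length_le⟩, List.prefix_iff_eq_take.mp hut⟩
    have hℓu : ℓ u = i := hlev u hu_mem
    have hu_ne : u ≠ [] := by
      intro h; rw [h, ℓnil] at hℓu; omega
    have key : ∀ w ∈ seg u t,
        ε - 3 * δ ≤ xss w (opAdjoint A (ys u)) ∧ ε - 3 * δ ≤ ys u (A (x w)) := by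
      intro w hw
      obtain ⟨k, ⟨hk1, hk2⟩, rfl⟩ := (mem_seg u t w).mp hw
      have hpre : u <+: t.take k := by
        rw [List.prefix_iff_eq_take.mp hut]
        exact List.take_isPrefix_take.mpr (Or.inl hk1)
      have hlw : ℓ u = ℓ (t.take k) := by rw [hℓu, hlev _ hw]
      have hlow := telA (t.take k).length (t.take k) u le_rfl hu_ne hpre hlw
      have hlen_take : (t.take k).length = k := by rw [List.length_take]; omega
      have hcnt : (t.take k).length - u.length ≤ 2 ^ (3 * ℓ (t.take k) + 2) := by
        have h1' := ℓlt (t.take k)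
        have h2' : 2 ^ (ℓ (t.take k) + 1) ≤ 2 ^ (3 * ℓ (t.take k) + 2) :=
          Nat.pow_le_pow_right (by norm_num) (by omega)
        omega
      have herr : (((t.take k).length - u.length : ℕ) : ℝ) *
          (δ / 2 ^ (3 * ℓ (t.take k) + 2)) ≤ δ := by
        have hc : (((t.take k).length - u.length : ℕ) : ℝ) ≤ 2 ^ (3 * ℓ (t.take k) + 2) := by
          exact_mod_cast hcnt
        calc (((t.take k).length - u.length : ℕ) : ℝ) * (δ / 2 ^ (3 * ℓ (t.take k) + 2)) ≤
            (2:ℝ) ^ (3 * ℓ (t.take k) + 2) * (δ / 2 ^ (3 * ℓ (t.take k) + 2)) :=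
              mul_le_mul_of_nonneg_right hc (by positivity)
        _ = δ := by
            have := (powpos (3 * ℓ (t.take k) + 2)).ne'
            field_simp
      have hNu : N u ≤ N (t.take k) := by
        rcases eq_or_ne u (t.take k) with he | hne
        · rw [he]
        · exact (hNmono _ _ hpre hne).le
      have hq5 := abs_le.mp (h5 (t.take k) u hu_ne hNu).le
      have hb5 : δ / 2 ^ (3 * L (t.take k) + 2) ≤ δ := by
        calc δ / 2 ^ (3 * L (t.take k) + 2) ≤ δ / 2 ^ 0 := dmono (by omega)
        _ = δ := by norm_num
      constructor
      · linarith [hlow, herr]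
      · linarith [hlow, herr, hq5.1, hq5.2, hb5]
    constructor
    · have hs := Finset.card_nsmul_le_sum (seg u t) (fun w => xss w (opAdjoint A (ys u)))
        (ε - 3 * δ) (fun w hw => (key w hw).1)
      rw [nsmul_eq_mul] at hs
      linarith [hs]
    · have hs := Finset.card_nsmul_le_sum (seg u t) (fun w => ys u (A (x w)))
        (ε - 3 * δ) (fun w hw => (key w hw).2)
      rw [nsmul_eq_mul] at hs
      linarith [hs]
  have part2 : ∀ i : ℕ, 1 ≤ i → ∀ u t : List ℕ, u <+: t → (∀ w ∈ seg u t, ℓ w = i) →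
      (ε - 3 * δ) * (seg u t).card ≤ ∑ w ∈ seg u t, xss t (opAdjoint A (ys w)) := by
    intro i hi u t hut hlev
    have ht_mem : t ∈ seg u t :=
      (mem_seg u t t).mpr ⟨t.length, ⟨hut.length_le, le_rfl⟩, List.take_length.symm⟩
    have hℓt : ℓ t = i := hlev t ht_mem
    have key : ∀ w ∈ seg u t, ε - 3 * δ ≤ xss t (opAdjoint A (ys w)) := by
      intro w hw
      have hℓw : ℓ w = i := hlev w hw
      have hw_ne : w ≠ [] := by
        intro h; rw [h, ℓnil] at hℓw; omega
      obtain ⟨k, ⟨hk1, hk2⟩, rfl⟩ := (mem_seg u t w).mp hw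
      have hpre : t.take k <+: t := List.take_prefix k t
      have hlow := telA t.length t (t.take k) le_rfl hw_ne hpre (by rw [hℓw, hℓt])
      have hcnt : t.length - (t.take k).length ≤ 2 ^ (3 * ℓ t + 2) := by
        have h1' := ℓlt t
        have h2' : 2 ^ (ℓ t + 1) ≤ 2 ^ (3 * ℓ t + 2) :=
          Nat.pow_le_pow_right (by norm_num) (by omega)
        omega
      have herr : ((t.length - (t.take k).length : ℕ) : ℝ) * (δ / 2 ^ (3 * ℓ t + 2)) ≤ δ := by
        have hc : ((t.length - (t.take k).length : ℕ) : ℝ) ≤ 2 ^ (3 * ℓ t + 2) := by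
          exact_mod_cast hcnt
        calc ((t.length - (t.take k).length : ℕ) : ℝ) * (δ / 2 ^ (3 * ℓ t + 2)) ≤
            (2:ℝ) ^ (3 * ℓ t + 2) * (δ / 2 ^ (3 * ℓ t + 2)) :=
              mul_le_mul_of_nonneg_right hc (by positivity)
        _ = δ := by
            have := (powpos (3 * ℓ t + 2)).ne'
            field_simp
      linarith [hlow, herr]
    have hs := Finset.card_nsmul_le_sum (seg u t) (fun w => xss t (opAdjoint A (ys w)))
      (ε - 3 * δ) key
    rw [nsmul_eq_mul] at hs
    linarith [hs]
  have part3 : ∀ v w : List ℕ, ((¬ v <+: w ∧ ¬ w <+: v) ∨ ℓ w ≠ ℓ v) →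
      |xss w (opAdjoint A (ys v))| < δ / 2 ^ max (ℓ v) (ℓ w) ∧
      |ys v (A (x w))| < δ / 2 ^ max (ℓ v) (ℓ w) := by
    intro v w hvw
    by_cases hv : v = []
    · subst hv
      constructor
      · rw [hys0, map_zero, map_zero, abs_zero]
        positivity
      · rw [hys0]
        simp only [ContinuousLinearMap.zero_apply, abs_zero]
        positivity
    by_cases hw : w = []
    · subst hw
      constructor
      · rw [hxss0]
        simp only [ContinuousLinearMap.zero_apply, abs_zero]
        positivity
      · rw [hx0, map_zero, map_zero, abs_zero]
        positivity
    have hfin : 3 / 2 * (δ / 2 ^ (2 * max (ℓ v) (ℓ w) + 2)) < δ / 2 ^ max (ℓ v) (ℓ w) := by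
      have e : (2:ℝ) ^ (2 * max (ℓ v) (ℓ w) + 2) =
          2 ^ max (ℓ v) (ℓ w) * 2 ^ (max (ℓ v) (ℓ w) + 2) := by
        rw [show 2 * max (ℓ v) (ℓ w) + 2 = max (ℓ v) (ℓ w) + (max (ℓ v) (ℓ w) + 2) by omega,
          pow_add]
      have h4' : (4:ℝ) ≤ 2 ^ (max (ℓ v) (ℓ w) + 2) := by
        calc (4:ℝ) = 2 ^ 2 := by norm_num
        _ ≤ 2 ^ (max (ℓ v) (ℓ w) + 2) := by
            apply pow_le_pow_right₀ (by norm_num) (by omega)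
      have hx' : (0:ℝ) < δ / 2 ^ max (ℓ v) (ℓ w) := by positivity
      rw [e, ← div_div]
      calc 3 / 2 * (δ / 2 ^ max (ℓ v) (ℓ w) / 2 ^ (max (ℓ v) (ℓ w) + 2)) ≤
          3 / 2 * (δ / 2 ^ max (ℓ v) (ℓ w) / 4) := by
            gcongr
      _ < δ / 2 ^ max (ℓ v) (ℓ w) := by linarith
    have hrel : (¬ v <+: w ∧ ¬ w <+: v) ∨ (w <+: v ∧ ℓ w < ℓ v) ∨ (v <+: w ∧ ℓ v < ℓ w) := by
      rcases hvw with h | hne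
      · exact Or.inl h
      · by_cases hpv : v <+: w
        · exact Or.inr (Or.inr ⟨hpv, lt_of_le_of_ne (ℓmono _ _ hpv.length_le)
            (fun h => hne h.symm)⟩)
        · by_cases hpw : w <+: v
          · exact Or.inr (Or.inl ⟨hpw, lt_of_le_of_ne (ℓmono _ _ hpw.length_le) hne⟩)
          · exact Or.inl ⟨hpv, hpw⟩
    obtain ⟨b1, b2, _⟩ := keyC v w hv hw hrel
    exact ⟨lt_of_le_of_lt b1 hfin, lt_of_le_of_lt b2 hfin⟩
  have part4 : ∀ u t : List ℕ, u <+: t → ∀ v : List ℕ,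
      ((∀ w ∈ seg u t, (w <+: v ∧ w ≠ v) ∧ ℓ w < ℓ v) ∨
       (∀ w ∈ seg u t, (v <+: w ∧ v ≠ w) ∧ ℓ v < ℓ w) ∨
       (∀ w ∈ seg u t, ¬ w <+: v ∧ ¬ v <+: w)) →
      (∑ w ∈ seg u t, |xss w (opAdjoint A (ys v))|) < δ ∧
      (∑ w ∈ seg u t, |ys v (A (x w))|) < δ ∧
      (∑ w ∈ seg u t, |xss v (opAdjoint A (ys w))|) < δ := by
    intro u t hut v hcase
    by_cases hv : v = []
    · subst hv
      refine ⟨?_, ?_, ?_⟩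
      · rw [Finset.sum_eq_zero (fun w _ => by rw [hys0, map_zero, map_zero, abs_zero])]
        exact hδ
      · rw [Finset.sum_eq_zero (fun w _ => by
          rw [hys0]; simp only [ContinuousLinearMap.zero_apply, abs_zero])]
        exact hδ
      · rw [Finset.sum_eq_zero (fun w _ => by
          rw [hxss0]; simp only [ContinuousLinearMap.zero_apply, abs_zero])]
        exact hδ
    · set G : ℕ → ℝ := fun k =>
        if k = 0 then 0 else 3 / 2 * δ * (1 / ((k:ℝ) + 1) - 1 / ((k:ℝ) + 2)) with hGdef
      have hGnonneg : ∀ k, 0 ≤ G k := by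
        intro k
        by_cases hk : k = 0
        · simp [hGdef, hk]
        · simp only [hGdef, if_neg hk]
          have h1' : (0:ℝ) < (k:ℝ) + 1 := by positivity
          have h2' : ((k:ℝ) + 1) ≤ (k:ℝ) + 2 := by linarith
          have h3' := one_div_le_one_div_of_le h1' h2'
          nlinarith [hδ0]
      have keyb : ∀ w ∈ seg u t,
          |xss w (opAdjoint A (ys v))| ≤ G w.length ∧
          |ys v (A (x w))| ≤ G w.length ∧
          |xss v (opAdjoint A (ys w))| ≤ G w.length := by
        intro w hw
        by_cases hwn : w = []
        · subst hwn
          refine ⟨?_, ?_, ?_⟩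
          · rw [hxss0]
            simp [hGdef]
          · rw [hx0, map_zero, map_zero, abs_zero]
            simp [hGdef]
          · rw [hys0, map_zero, map_zero, abs_zero]
            simp [hGdef]
        · have hrel : (¬ v <+: w ∧ ¬ w <+: v) ∨ (w <+: v ∧ ℓ w < ℓ v) ∨
              (v <+: w ∧ ℓ v < ℓ w) := by
            rcases hcase with hc | hc | hc
            · exact Or.inr (Or.inl ⟨(hc w hw).1.1, (hc w hw).2⟩)
            · exact Or.inr (Or.inr ⟨(hc w hw).1.1, (hc w hw).2⟩)
            · exact Or.inl ⟨(hc w hw).2, (hc w hw).1⟩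
          obtain ⟨b1, b2, b3⟩ := keyC v w hv hwn hrel
          have hwl : 1 ≤ w.length := List.length_pos_iff.mpr hwn
          have hp1 : w.length + 2 ≤ 2 ^ (ℓ w + 1) := by
            have := ℓlt w
            omega
          have hsq : (w.length + 1) * (w.length + 2) ≤ 2 ^ (2 * max (ℓ v) (ℓ w) + 2) := by
            calc (w.length + 1) * (w.length + 2) ≤ 2 ^ (ℓ w + 1) * 2 ^ (ℓ w + 1) :=
              Nat.mul_le_mul (by omega) hp1
            _ = 2 ^ (2 * ℓ w + 2) := by
                rw [← pow_add]
                congr 1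
                omega
            _ ≤ 2 ^ (2 * max (ℓ v) (ℓ w) + 2) := by
                apply Nat.pow_le_pow_right (by norm_num)
                have := le_max_right (ℓ v) (ℓ w)
                omega
          have hGge : 3 / 2 * (δ / 2 ^ (2 * max (ℓ v) (ℓ w) + 2)) ≤ G w.length := by
            simp only [hGdef, if_neg (show w.length ≠ 0 by omega)]
            have e : 1 / ((w.length:ℝ) + 1) - 1 / ((w.length:ℝ) + 2) =
                1 / (((w.length:ℝ) + 1) * ((w.length:ℝ) + 2)) := by
              field_simp
              ring
            rw [e]
            have hQP : ((w.length:ℝ) + 1) * ((w.length:ℝ) + 2) ≤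
                (2:ℝ) ^ (2 * max (ℓ v) (ℓ w) + 2) := by
              have := hsq
              push_cast at this ⊢
              exact_mod_cast this
            have hQ0 : (0:ℝ) < ((w.length:ℝ) + 1) * ((w.length:ℝ) + 2) := by positivity
            have hdd : δ / (2:ℝ) ^ (2 * max (ℓ v) (ℓ w) + 2) ≤
                δ / (((w.length:ℝ) + 1) * ((w.length:ℝ) + 2)) := by
              gcongr
            calc 3 / 2 * (δ / 2 ^ (2 * max (ℓ v) (ℓ w) + 2)) ≤
                3 / 2 * (δ / (((w.length:ℝ) + 1) * ((w.length:ℝ) + 2))) := by linarith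
            _ = 3 / 2 * δ * (1 / (((w.length:ℝ) + 1) * ((w.length:ℝ) + 2))) := by ring
          exact ⟨b1.trans hGge, b2.trans hGge, b3.trans hGge⟩
      have hinj_take : ∀ k1 ∈ Finset.Icc u.length t.length, ∀ k2 ∈ Finset.Icc u.length t.length,
          t.take k1 = t.take k2 → k1 = k2 := by
        intro k1 h1' k2 h2' he
        have e1 := congrArg List.length he
        rw [List.length_take, List.length_take] at e1
        rw [Finset.mem_Icc] at h1' h2'
        omega
      have hsum_seg : ∀ F : List ℕ → ℝ,
          ∑ w ∈ seg u t, F w = ∑ k ∈ Finset.Icc u.length t.length, F (t.take k) := by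
        intro F
        simp only [seg]
        exact Finset.sum_image hinj_take
      have hsumG : ∑ k ∈ Finset.Icc u.length t.length, G k < δ := by
        have hsub : Finset.Icc u.length t.length ⊆ Finset.range (t.length + 1) := by
          intro k hk
          rw [Finset.mem_Icc] at hk
          rw [Finset.mem_range]
          omega
        have hle := Finset.sum_le_sum_of_subset_of_nonneg hsub (fun k _ _ => hGnonneg k)
        have hrange : ∀ n : ℕ, ∑ k ∈ Finset.range (n + 1), G k =
            3 / 2 * δ * (1 / 2 - 1 / ((n:ℝ) + 2)) := by
          intro n
          induction n with
          | zero =>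
            simp [hGdef]
          | succ m ihm =>
            rw [Finset.sum_range_succ, ihm]
            simp only [hGdef, if_neg (Nat.succ_ne_zero m)]
            push_cast
            ring
        have hpos2 : (0:ℝ) < 1 / ((t.length:ℝ) + 2) := by positivity
        calc ∑ k ∈ Finset.Icc u.length t.length, G k ≤
            ∑ k ∈ Finset.range (t.length + 1), G k := hle
        _ = 3 / 2 * δ * (1 / 2 - 1 / ((t.length:ℝ) + 2)) := hrange t.length
        _ < δ := by nlinarith [hδ, hpos2]
      have hGlen : ∀ k ∈ Finset.Icc u.length t.length, G ((t.take k).length) = G k := by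
        intro k hk
        rw [Finset.mem_Icc] at hk
        rw [List.length_take]
        congr 1
        omega
      refine ⟨?_, ?_, ?_⟩
      · calc ∑ w ∈ seg u t, |xss w (opAdjoint A (ys v))| ≤ ∑ w ∈ seg u t, G w.length :=
            Finset.sum_le_sum (fun w hw => (keyb w hw).1)
        _ = ∑ k ∈ Finset.Icc u.length t.length, G ((t.take k).length) :=
            hsum_seg (fun w => G w.length)
        _ = ∑ k ∈ Finset.Icc u.length t.length, G k := Finset.sum_congr rfl hGlen
        _ < δ := hsumG
      · calc ∑ w ∈ seg u t, |ys v (A (x w))| ≤ ∑ w ∈ seg u t, G w.length :=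
            Finset.sum_le_sum (fun w hw => (keyb w hw).2.1)
        _ = ∑ k ∈ Finset.Icc u.length t.length, G ((t.take k).length) :=
            hsum_seg (fun w => G w.length)
        _ = ∑ k ∈ Finset.Icc u.length t.length, G k := Finset.sum_congr rfl hGlen
        _ < δ := hsumG
      · calc ∑ w ∈ seg u t, |xss v (opAdjoint A (ys w))| ≤ ∑ w ∈ seg u t, G w.length :=
            Finset.sum_le_sum (fun w hw => (keyb w hw).2.2)
        _ = ∑ k ∈ Finset.Icc u.length t.length, G ((t.take k).length) :=
            hsum_seg (fun w => G w.length)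
        _ = ∑ k ∈ Finset.Icc u.length t.length, G k := Finset.sum_congr rfl hGlen
        _ < δ := hsumG
  exact ⟨part1, part2, part3, part4⟩
end
end
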